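/- Let 𝔓 be a Borel subset of I and X a family of bounded, uniformly continuous options with pricing functional P. Then for every bounded Borel G : Ω → ℝ, Ṽ^sp_{X,P,𝔓}(G) = inf_{N ≥ 0} Ṽ^sp_{X,P,I}(G − N·λ_𝔓), where λ_𝔓(ω) := (inf_{υ∈𝔓} ‖ω − υ‖) ∧ 1. -/

import Mathlib

open MeasureTheory Set Filter

noncomputable section

namespace RobustFinance

/-- Continuous nonnegative paths on `[0,T]` (extended constantly outside `[0,T]`),
starting at `(1,…,1)`.  As a subtype of the bounded continuous functions, the induced
metric is exactly the sup-norm distance `sup_{0 ≤ t ≤ T} max_i |ω_i(t) − υ_i(t)|`. -/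
def Path (T : ℝ) (m : ℕ) : Type :=
  {ω : BoundedContinuousFunction ℝ (Fin m → ℝ) //
    (∀ t i, 0 ≤ ω t i) ∧ (∀ i, ω 0 i = 1) ∧
    (∀ t, t ≤ 0 → ω t = ω 0) ∧ (∀ t, T ≤ t → ω t = ω T)}

instance instMetricPath (T : ℝ) (m : ℕ) : MetricSpace (Path T m) := by
  unfold Path; infer_instance

instance instMeasPath (T : ℝ) (m : ℕ) : MeasurableSpace (Path T m) := borel _

instance instBorelPath (T : ℝ) (m : ℕ) : BorelSpace (Path T m) := ⟨rfl⟩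

variable {T : ℝ} {m : ℕ}

/-- The canonical (coordinate) process `S_t(ω) = ω_t`. -/
def proc (T : ℝ) (m : ℕ) (t : ℝ) (ω : Path T m) : Fin m → ℝ := ω.1 t

lemma measurable_proc (T : ℝ) (m : ℕ) (t : ℝ) : Measurable (proc T m t) := by
  have h1 : Continuous fun ω : Path T m =>
      (ω.1 : BoundedContinuousFunction ℝ (Fin m → ℝ)) := continuous_subtype_val
  exact ((continuous_eval_const t).comp h1).measurable

/-- The natural filtration of the canonical process. -/
def natFilt (T : ℝ) (m : ℕ) : Filtration ℝ (instMeasPath T m) where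
  seq t := ⨆ u ∈ Set.Icc (0:ℝ) t, MeasurableSpace.comap (proc T m u) inferInstance
  mono' := fun _ _ hst => biSup_mono fun u hu => ⟨hu.1, hu.2.trans hst⟩
  le' := fun _ => iSup₂_le fun u _ => measurable_iff_comap_le.mp (measurable_proc T m u)

/-- A martingale measure: a Borel probability measure on the path space under which the
canonical process is an integrable martingale in its natural filtration. -/
def IsMartingaleMeasure (μ : Measure (Path T m)) : Prop :=
  IsProbabilityMeasure μ ∧ (∀ t : ℝ, Integrable (proc T m t) μ) ∧
    Martingale (proc T m) (natFilt T m) μ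

/-- Martingale measures giving full mass to a set `I`. -/
def MI (T : ℝ) (m : ℕ) (I : Set (Path T m)) : Set (Measure (Path T m)) :=
  {μ | IsMartingaleMeasure μ ∧ μ I = 1}

/-- First `d` coordinates of a `d+K` dimensional vector. -/
def liftFin (d K : ℕ) (x : Fin (d + K) → ℝ) : Fin d → ℝ := fun j => x (Fin.castAdd K j)

/-- The information space determined by `K` continuously traded options on the
first `d` coordinates, with given initial prices. -/
def InfoSpace (T : ℝ) (d K : ℕ) (Xc : Fin K → (Fin d → ℝ) → ℝ) (pc : Fin K → ℝ) :
    Set (Path T (d + K)) :=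
  {ω | ∀ i : Fin K, ω.1 T (Fin.natAdd d i) = Xc i (liftFin d K (ω.1 T)) / pc i}

/-- Standing regularity assumptions on the continuously traded options: positive prices and
nonnegative, bounded and uniformly continuous payoffs on the nonnegative orthant. -/
def OptionData (d K : ℕ) (Xc : Fin K → (Fin d → ℝ) → ℝ) (pc : Fin K → ℝ) : Prop :=
  ∀ i : Fin K, 0 < pc i ∧ (∀ x : Fin d → ℝ, (∀ j, 0 ≤ x j) → 0 ≤ Xc i x) ∧
    (∃ C, ∀ x : Fin d → ℝ, (∀ j, 0 ≤ x j) → |Xc i x| ≤ C) ∧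
    UniformContinuousOn (Xc i) {x | ∀ j, 0 ≤ x j}

/-- Assumption A1: either there are no continuously traded options, or all nearby prices of
the continuously traded options are attained by some martingale measure giving full mass to
the correspondingly re-scaled information space. -/
def AssumptionA1 (T : ℝ) (d K : ℕ) (Xc : Fin K → (Fin d → ℝ) → ℝ) (pc : Fin K → ℝ) : Prop :=
  K = 0 ∨ ∃ ε > (0:ℝ), ∀ p : Fin K → ℝ, (∀ i, |p i - pc i| ≤ ε) →
    ∃ μ : Measure (Path T (d + K)), IsMartingaleMeasure μ ∧ μ (InfoSpace T d K Xc p) = 1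

/-- A simple (piecewise constant in time) trading strategy: for each path, finitely
many rebalancing times `0 = s_0 < … < s_{num} = T` and holdings `c_k` on `(s_k, s_{k+1}]`. -/
structure SimpleStrategy (T : ℝ) (m : ℕ) where
  num : Path T m → ℕ
  time : Path T m → ℕ → ℝ
  coeff : Path T m → ℕ → Fin m → ℝ
  time_zero : ∀ ω, time ω 0 = 0
  time_last : ∀ ω, time ω (num ω) = T
  time_mono : ∀ ω, StrictMonoOn (time ω) (Set.Iic (num ω))

/-- The holdings of a simple strategy at time `t`:
`γ(ω)_t = Σ_k c_k(ω)·1_{(s_k(ω), s_{k+1}(ω)]}(t)`. -/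
def SimpleStrategy.holding (γ : SimpleStrategy T m) (ω : Path T m) (t : ℝ) : Fin m → ℝ :=
  ∑ k ∈ Finset.range (γ.num ω),
    Set.indicator (Set.Ioc (γ.time ω k) (γ.time ω (k + 1))) (fun _ => γ.coeff ω k) t

/-- The pathwise gains `(γ·ω)_t = Σ_k c_k(ω)·(ω_{s_{k+1}∧t} − ω_{s_k∧t})`. -/
def SimpleStrategy.gains (γ : SimpleStrategy T m) (ω : Path T m) (t : ℝ) : ℝ :=
  ∑ k ∈ Finset.range (γ.num ω), ∑ i,
    γ.coeff ω k i * (ω.1 (min (γ.time ω (k + 1)) t) i - ω.1 (min (γ.time ω k) t) i)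

/-- Non-anticipativity: the holdings at time `t` only depend on the path up to time `t`. -/
def SimpleStrategy.NonAnticipative (γ : SimpleStrategy T m) : Prop :=
  ∀ ω υ : Path T m, ∀ t ∈ Set.Icc (0:ℝ) T,
    (∀ u ∈ Set.Icc (0:ℝ) t, ω.1 u = υ.1 u) → γ.holding ω t = γ.holding υ t

/-- Admissibility on a set `A`: non-anticipative with gains uniformly bounded below on `A`. -/
def SimpleStrategy.AdmissibleOn (γ : SimpleStrategy T m) (A : Set (Path T m)) : Prop :=
  γ.NonAnticipative ∧ ∃ M > (0:ℝ), ∀ ω ∈ A, ∀ t ∈ Set.Icc (0:ℝ) T, -M ≤ γ.gains ω t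

/-- Superhedging cost using simple strategies (admissible on `I`, superreplicating on `A`). -/
def Vsp (I A : Set (Path T m)) (G : Path T m → ℝ) : ℝ :=
  sInf {x : ℝ | ∃ γ : SimpleStrategy T m, γ.AdmissibleOn I ∧ ∀ ω ∈ A, G ω ≤ x + γ.gains ω T}

/-- Supremum of the expectations of `G` over a set of measures. -/
def Psup (MM : Set (Measure (Path T m))) (G : Path T m → ℝ) : ℝ :=
  sSup ((fun μ => ∫ ω, G ω ∂μ) '' MM)

/-- `ε`-enlargement of `𝔓` inside `I`. -/
def enlarge (I P : Set (Path T m)) (ε : ℝ) : Set (Path T m) :=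
  {ω ∈ I | Metric.infDist ω P ≤ ε}

/-- Approximate superhedging cost (no static options): superreplication on some `𝔓^ε`. -/
def VspApprox (I P : Set (Path T m)) (G : Path T m → ℝ) : ℝ :=
  sInf {x : ℝ | ∃ ε > (0:ℝ), ∃ γ : SimpleStrategy T m, γ.AdmissibleOn I ∧
    ∀ ω ∈ enlarge I P ε, G ω ≤ x + γ.gains ω T}

/-- `λ_𝔓(ω) = (inf_{υ ∈ 𝔓} ‖ω − υ‖) ∧ 1`. -/
def lamP (P : Set (Path T m)) (ω : Path T m) : ℝ := min (Metric.infDist ω P) 1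

/-- Sup norm `‖ω‖ = sup_{0≤t≤T} max_i |ω^{(i)}_t|` of a path. -/
def pathNorm (ω : Path T m) : ℝ := ‖ω.1‖

/-- `‖ω^{(i)}‖ = sup_{0 ≤ t ≤ T} ω^{(i)}_t`. -/
def coordSup (ω : Path T m) (i : Fin m) : ℝ := ⨆ t : Set.Icc (0:ℝ) T, ω.1 t.1 i

/-- Running supremum `sup_{0 ≤ u ≤ t} max_i |ω^{(i)}_u|`. -/
def runSup (ω : Path T m) (t : ℝ) : ℝ := ⨆ u : Set.Icc (0:ℝ) t, ‖ω.1 u.1‖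

/-- Times of the `N`-th Lebesgue partition of a path (successive hitting times of moves of
size `2^{-N}`, capped at `T`). -/
def lebTime (N : ℕ) (ω : Path T m) : ℕ → ℝ
  | 0 => 0
  | k + 1 =>
      sInf ({t : ℝ | lebTime N ω k ≤ t ∧
        dist (ω.1 t) (ω.1 (lebTime N ω k)) = 1 / 2 ^ N} ∪ {T})

/-- The number `m^{(N)}(ω)` of steps of the `N`-th Lebesgue partition. -/
def lebCount (N : ℕ) (ω : Path T m) : ℕ := sInf {k : ℕ | lebTime N ω k = T}

/-- Superhedging cost with a semi-static simple strategy: a static position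
`a₀ + Σ_l a_l X_{idx l}` at cost `a₀ + Σ_l a_l 𝒫(X_{idx l})`, plus a simple admissible
dynamic strategy, together superreplicating `G` on `A`. -/
def VspSemi {ι : Type} (I A : Set (Path T m)) (pay : ι → Path T m → ℝ) (pr : ι → ℝ)
    (G : Path T m → ℝ) : ℝ :=
  sInf {x : ℝ | ∃ (n : ℕ) (a0 : ℝ) (a : Fin n → ℝ) (idx : Fin n → ι),
    x = a0 + ∑ l, a l * pr (idx l) ∧
    ∃ γ : SimpleStrategy T m, γ.AdmissibleOn I ∧
      ∀ ω ∈ A, G ω ≤ (a0 + ∑ l, a l * pay (idx l) ω) + γ.gains ω T}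

/-- Approximate semi-static superhedging cost: superreplication is only required on
some `ε`-enlargement `𝔓^ε` of the prediction set. -/
def VspSemiApprox {ι : Type} (I P : Set (Path T m)) (pay : ι → Path T m → ℝ) (pr : ι → ℝ)
    (G : Path T m → ℝ) : ℝ :=
  sInf {x : ℝ | ∃ ε > (0:ℝ), ∃ (n : ℕ) (a0 : ℝ) (a : Fin n → ℝ) (idx : Fin n → ι),
    x = a0 + ∑ l, a l * pr (idx l) ∧
    ∃ γ : SimpleStrategy T m, γ.AdmissibleOn I ∧
      ∀ ω ∈ enlarge I P ε, G ω ≤ (a0 + ∑ l, a l * pay (idx l) ω) + γ.gains ω T}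

/-- Calibrated market models: martingale measures supported on `I` and on the prediction
set `𝔓`, repricing all statically traded options. -/
def Calibrated {ι : Type} (I P : Set (Path T m)) (pay : ι → Path T m → ℝ) (pr : ι → ℝ) :
    Set (Measure (Path T m)) :=
  {μ | IsMartingaleMeasure μ ∧ μ I = 1 ∧ μ P = 1 ∧ ∀ i, (∫ ω, pay i ω ∂μ) = pr i}

/-- `η`-miscalibrated market models: `P(𝔓^η) > 1 − η` and `|E_P[X] − 𝒫(X)| < η` for all
statically traded options `X`. -/
def CalibratedEta {ι : Type} (I P : Set (Path T m)) (pay : ι → Path T m → ℝ) (pr : ι → ℝ)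
    (η : ℝ) : Set (Measure (Path T m)) :=
  {μ | IsMartingaleMeasure μ ∧ μ I = 1 ∧ 1 - η < (μ (enlarge I P η)).toReal ∧
    ∀ i, |(∫ ω, pay i ω ∂μ) - pr i| < η}

/-- `P̃(G) = lim_{η ↓ 0} sup_{P ∈ M^η} E_P[G]`; since the supremum is monotone in `η`,
the limit equals the infimum over `η > 0`. -/
def Ptilde {ι : Type} (I P : Set (Path T m)) (pay : ι → Path T m → ℝ) (pr : ι → ℝ)
    (G : Path T m → ℝ) : ℝ :=
  sInf {r : ℝ | ∃ η > (0:ℝ), r = Psup (CalibratedEta I P pay pr η) G}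

/-- Bounded-Lipschitz (Lévy–Prokhorov type) distance between measures on `ℝ₊`. -/
def blDist (μ ν : Measure ℝ) : ℝ :=
  ⨆ f : {f : ℝ → ℝ // LipschitzOnWith 1 f (Set.Ici 0) ∧ ∀ x ∈ Set.Ici (0:ℝ), |f x| ≤ 1},
    |(∫ x in Set.Ici (0:ℝ), f.1 x ∂μ) - ∫ x in Set.Ici (0:ℝ), f.1 x ∂ν|

/-- Convex-order increase of a family of measures on `ℝ₊`:
`∫ φ dμ_j ≤ ∫ φ dμ_{j'}` for `j ≤ j'`, for every convex `φ` with finite integrals. -/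
def ConvexOrderIncr {n : ℕ} (μs : Fin (n + 1) → Measure ℝ) : Prop :=
  ∀ φ : ℝ → ℝ, ConvexOn ℝ (Set.Ici 0) φ → (∀ j, IntegrableOn φ (Set.Ici 0) (μs j)) →
    ∀ j j' : Fin (n + 1), j ≤ j' →
      (∫ x in Set.Ici (0:ℝ), φ x ∂(μs j)) ≤ ∫ x in Set.Ici (0:ℝ), φ x ∂(μs j')

/-- `η`-approximate models with exact marginals at the last maturity: the law of
`S^{(i)}_{T_n}` equals `μ^{(i)}_n`, earlier marginals are within `η` in the
bounded-Lipschitz distance, and `P(𝔓^η) ≥ 1 − η`. -/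
def MtildeEta {d K n : ℕ} (Tm : Fin (n + 1) → ℝ) (μs : Fin d → Fin (n + 1) → Measure ℝ)
    (I P : Set (Path T (d + K))) (η : ℝ) : Set (Measure (Path T (d + K))) :=
  {μ | IsMartingaleMeasure μ ∧
    (∀ i : Fin d, μ.map (fun ω => ω.1 (Tm (Fin.last n)) (Fin.castAdd K i)) = μs i (Fin.last n)) ∧
    (∀ i : Fin d, ∀ j : Fin (n + 1), j ≠ Fin.last n →
      blDist (μ.map (fun ω => ω.1 (Tm j) (Fin.castAdd K i))) (μs i j) ≤ η) ∧
    1 - η ≤ (μ (enlarge I P η)).toReal}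

/-- `P̃_{μ,𝔓}(G) = lim_{η↓0} sup_{P ∈ M̃^η_{μ,𝔓}} E_P[G]` (by monotonicity, the limit
equals the infimum over `η > 0`). -/
def PtildeMu {d K n : ℕ} (Tm : Fin (n + 1) → ℝ) (μs : Fin d → Fin (n + 1) → Measure ℝ)
    (I P : Set (Path T (d + K))) (G : Path T (d + K) → ℝ) : ℝ :=
  sInf {r : ℝ | ∃ η > (0:ℝ), r = Psup (MtildeEta Tm μs I P η) G}

/-- Time invariance of a set of paths relative to the maturities `Tm`. -/
def TimeInvariant {n : ℕ} (T : ℝ) (m : ℕ) (Tm : Fin (n + 1) → ℝ) (A : Set (Path T m)) : Prop :=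
  ∀ f : ℝ → ℝ, Monotone f → Continuous f → f 0 = 0 → (∀ j, f (Tm j) = Tm j) →
    ∀ ω ∈ A, ∀ ω' : Path T m, (∀ t ∈ Set.Icc (0:ℝ) T, ω'.1 t = ω.1 (f t)) → ω' ∈ A

/-- The piecewise constant path with value `v k` on `[s k, s (k+1))` for `k < M`,
and value `v (M-1)` at the terminal time `T`. -/
def stepFn (T : ℝ) (m M : ℕ) (s : ℕ → ℝ) (v : ℕ → Fin m → ℝ) : ℝ → Fin m → ℝ :=
  fun t => if t = T then v (M - 1)
    else ∑ k ∈ Finset.range M, Set.indicator (Set.Ico (s k) (s (k + 1))) (fun _ => v k) t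

/-- Sup-norm over `[0,T]` of an arbitrary function of time. -/
def funSup (T : ℝ) {m : ℕ} (f : ℝ → Fin m → ℝ) : ℝ := ⨆ t : Set.Icc (0:ℝ) T, ‖f t.1‖

/-- The `σ`-algebra generated by the `P`-null sets. -/
def nullMS {ΩW : Type} [MeasurableSpace ΩW] (P : Measure ΩW) : MeasurableSpace ΩW :=
  MeasurableSpace.generateFrom {s | P s = 0}

/-- Natural filtration of a process `W`. -/
def natFiltOf {ΩW : Type} [MeasurableSpace ΩW] {E : Type} [MeasurableSpace E]
    (W : ℝ → ΩW → E) (t : ℝ) : MeasurableSpace ΩW :=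
  ⨆ u ∈ Set.Icc (0:ℝ) t, MeasurableSpace.comap (W u) inferInstance

/-- The usual augmentation (by `P`-null sets) of the natural filtration of `W`. -/
def augFiltOf {ΩW : Type} [MeasurableSpace ΩW] {E : Type} [MeasurableSpace E]
    (P : Measure ΩW) (W : ℝ → ΩW → E) (t : ℝ) : MeasurableSpace ΩW :=
  natFiltOf W t ⊔ nullMS P

/-- A finite-dimensional standard Brownian motion: measurable in space, starting at `0`,
with continuous paths, with increments over `[s,t]` distributed as a vector of independent
centred Gaussians of variance `t − s`, independent of the past. -/
def IsBrownianMotion {ΩW : Type} [MeasurableSpace ΩW] (P : Measure ΩW) {k : ℕ}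
    (W : ℝ → ΩW → (Fin k → ℝ)) : Prop :=
  (∀ u : ℝ, Measurable (W u)) ∧
  (∀ᵐ x ∂P, W 0 x = 0) ∧
  (∀ᵐ x ∂P, Continuous fun t => W t x) ∧
  (∀ s t : ℝ, 0 ≤ s → s ≤ t →
    P.map (fun x => W t x - W s x) =
      Measure.pi fun _ : Fin k => ProbabilityTheory.gaussianReal 0 (Real.toNNReal (t - s))) ∧
  (∀ s t : ℝ, 0 ≤ s → s ≤ t →
    ProbabilityTheory.Indep
      (MeasurableSpace.comap (fun x => W t x - W s x) inferInstance) (natFiltOf W s) P)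

/-- Martingale property of `M` with respect to a (raw) filtration `F` under `P`. -/
def MartingaleOn {ΩW : Type} [MeasurableSpace ΩW] (P : Measure ΩW)
    (F : ℝ → MeasurableSpace ΩW) {E : Type} [NormedAddCommGroup E] [NormedSpace ℝ E]
    [CompleteSpace E] (M : ℝ → ΩW → E) : Prop :=
  (∀ t : ℝ, StronglyMeasurable[F t] (M t)) ∧ (∀ t : ℝ, Integrable (M t) P) ∧
    ∀ s t : ℝ, s ≤ t → P[M t | F s] =ᵐ[P] M s

/-- `μ` is the law of a continuous martingale with values in `ℝ₊^m` starting at `(1,…,1)`,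
defined on a complete probability space whose filtration is the usual augmentation of the
natural filtration of a finite-dimensional Brownian motion. -/
def InBrownianClass (μ : Measure (Path T m)) : Prop :=
  ∃ (ΩW : Type) (_mΩ : MeasurableSpace ΩW) (P : Measure ΩW),
    IsProbabilityMeasure P ∧ (∀ s : Set ΩW, P s = 0 → MeasurableSet s) ∧
    ∃ (k : ℕ) (W : ℝ → ΩW → (Fin k → ℝ)), IsBrownianMotion P W ∧
      ∃ Φ : ΩW → Path T m, Measurable Φ ∧ μ = P.map Φ ∧
        MartingaleOn P (augFiltOf P W) (fun t x => (Φ x).1 t)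

/-- The set whose infimum defines `VspSemiApprox`. -/
def SetL {T : ℝ} {m : ℕ} {ι : Type} (I P : Set (Path T m)) (pay : ι → Path T m → ℝ)
    (pr : ι → ℝ) (G : Path T m → ℝ) : Set ℝ :=
  {x : ℝ | ∃ ε > (0:ℝ), ∃ (n : ℕ) (a0 : ℝ) (a : Fin n → ℝ) (idx : Fin n → ι),
    x = a0 + ∑ l, a l * pr (idx l) ∧
    ∃ γ : SimpleStrategy T m, γ.AdmissibleOn I ∧
      ∀ ω ∈ enlarge I P ε, G ω ≤ (a0 + ∑ l, a l * pay (idx l) ω) + γ.gains ω T}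

lemma lamP_nonneg {T : ℝ} {m : ℕ} (P : Set (Path T m)) (ω : Path T m) :
    0 ≤ lamP P ω := le_min Metric.infDist_nonneg zero_le_one

lemma lamP_le_one {T : ℝ} {m : ℕ} (P : Set (Path T m)) (ω : Path T m) :
    lamP P ω ≤ 1 := min_le_right _ _

/-- The trivial (do nothing) strategy. -/
def trivStrat (T : ℝ) (hT : 0 < T) (m : ℕ) : SimpleStrategy T m where
  num _ := 1
  time _ k := if k = 0 then 0 else T
  coeff _ _ := 0
  time_zero _ := if_pos rfl
  time_last _ := if_neg one_ne_zero
  time_mono ω := by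
    intro a ha b hb hab
    simp only [Set.mem_Iic] at ha hb
    have ha0 : a = 0 := by omega
    have hb1 : b = 1 := by omega
    subst ha0; subst hb1
    simpa using hT

lemma trivStrat_gains {T : ℝ} (hT : 0 < T) (m : ℕ) (ω : Path T m) (t : ℝ) :
    (trivStrat T hT m).gains ω t = 0 := by
  simp [trivStrat, SimpleStrategy.gains]

lemma trivStrat_adm {T : ℝ} (hT : 0 < T) (m : ℕ) (A : Set (Path T m)) :
    (trivStrat T hT m).AdmissibleOn A := by
  refine ⟨?_, 1, one_pos, ?_⟩
  · intro ω υ t _ _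
    simp [trivStrat, SimpleStrategy.holding]
  · intro ω _ t _
    rw [trivStrat_gains]; norm_num

lemma const_mem_SetL {T : ℝ} {m : ℕ} {ι : Type} (hT : 0 < T) (I P : Set (Path T m))
    (pay : ι → Path T m → ℝ) (pr : ι → ℝ) (G : Path T m → ℝ) (C : ℝ)
    (hC : ∀ ω, G ω ≤ C) : C ∈ SetL I P pay pr G := by
  refine ⟨1, one_pos, 0, C, fun l => l.elim0, fun l => l.elim0, by simp,
    trivStrat T hT m, trivStrat_adm hT m I, ?_⟩
  intro ω _
  rw [trivStrat_gains]
  simpa using hC ω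

lemma mem_SetL_shift_toL {T : ℝ} {m : ℕ} {ι : Type} {I Pred : Set (Path T m)}
    {pay : ι → Path T m → ℝ} {pr : ι → ℝ} {G : Path T m → ℝ} {N : ℝ} (hN : 0 ≤ N)
    {δ : ℝ} (hδ : 0 < δ) {x : ℝ}
    (hx : x ∈ SetL I I pay pr (fun ω => G ω - N * lamP Pred ω)) :
    x + δ ∈ SetL I Pred pay pr G := by
  obtain ⟨ε, hε, n, a0, a, idx, hxeq, γ, hadm, hh⟩ := hx
  refine ⟨δ / (N + 1), by positivity, n, a0 + δ, a, idx, by rw [hxeq]; ring, γ, hadm, ?_⟩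
  rintro ω ⟨hωI, hωd⟩
  have hω' : ω ∈ enlarge I I ε := by
    refine ⟨hωI, le_trans ?_ hε.le⟩
    have h := Metric.infDist_le_dist_of_mem (x := ω) hωI
    simpa using h
  have h1 := hh ω hω'
  have hlam0 : 0 ≤ lamP Pred ω := lamP_nonneg _ _
  have hlam_le : lamP Pred ω ≤ δ / (N + 1) := le_trans (min_le_left _ _) hωd
  have h2 : N * lamP Pred ω ≤ δ := by
    have h3 := mul_le_mul_of_nonneg_left hlam_le hN
    have h4 : N * (δ / (N + 1)) ≤ δ := by
      rw [mul_div_assoc', div_le_iff₀ (by positivity)]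
      nlinarith
    linarith
  simp only at h1
  linarith

lemma mem_SetL_to_SN {T : ℝ} {m : ℕ} {ι : Type} {I Pred : Set (Path T m)}
    {pay : ι → Path T m → ℝ} {pr : ι → ℝ} {G : Path T m → ℝ} (hT : 0 < T)
    (hpaybd : ∀ i, ∃ C, ∀ ω, |pay i ω| ≤ C) {C : ℝ} (hC : ∀ ω, G ω ≤ C) {x : ℝ}
    (hx : x ∈ SetL I Pred pay pr G) :
    ∃ N : ℝ, 0 ≤ N ∧ x ∈ SetL I I pay pr (fun ω => G ω - N * lamP Pred ω) := by
  obtain ⟨ε, hε, n, a0, a, idx, hxeq, γ, ⟨hna, M, hM, hgain⟩, hh⟩ := hx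
  choose Cp hCp using fun l : Fin n => hpaybd (idx l)
  set B := ∑ l, |a l| * Cp l with hB
  set e := min ε 1 with he
  have he0 : 0 < e := lt_min hε one_pos
  set N := max 0 ((C + B + M - a0) / e) with hNdef
  have hN0 : 0 ≤ N := le_max_left _ _
  refine ⟨N, hN0, ε, hε, n, a0, a, idx, hxeq, γ, ⟨hna, M, hM, hgain⟩, ?_⟩
  rintro ω ⟨hωI, -⟩
  have hlam0 : 0 ≤ lamP Pred ω := lamP_nonneg _ _
  by_cases hd : Metric.infDist ω Pred ≤ ε
  · have h1 := hh ω ⟨hωI, hd⟩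
    have h2 : 0 ≤ N * lamP Pred ω := mul_nonneg hN0 hlam0
    simp only
    linarith
  · push_neg at hd
    have hle : e ≤ lamP Pred ω := min_le_min hd.le le_rfl
    have hNe : C + B + M - a0 ≤ N * e := by
      have h1 : (C + B + M - a0) / e ≤ N := le_max_right _ _
      calc C + B + M - a0 = (C + B + M - a0) / e * e := by field_simp
        _ ≤ N * e := mul_le_mul_of_nonneg_right h1 he0.le
    have hNlam : N * e ≤ N * lamP Pred ω := mul_le_mul_of_nonneg_left hle hN0
    have hsum : -B ≤ ∑ l, a l * pay (idx l) ω := by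
      have hterm : ∀ l ∈ Finset.univ, -(|a l| * Cp l) ≤ a l * pay (idx l) ω := by
        intro l _
        have h1 : |a l * pay (idx l) ω| ≤ |a l| * Cp l := by
          rw [abs_mul]
          exact mul_le_mul_of_nonneg_left (hCp l ω) (abs_nonneg _)
        linarith [neg_abs_le (a l * pay (idx l) ω)]
      calc -B = ∑ l, -(|a l| * Cp l) := by rw [hB, ← Finset.sum_neg_distrib]
        _ ≤ _ := Finset.sum_le_sum hterm
    have hg : -M ≤ γ.gains ω T := hgain ω hωI T ⟨hT.le, le_rfl⟩
    have hGω := hC ω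
    simp only
    linarith

lemma mem_SN_shift {T : ℝ} {m : ℕ} {ι : Type} {I Pred : Set (Path T m)}
    {pay : ι → Path T m → ℝ} {pr : ι → ℝ} {G : Path T m → ℝ} {N N' : ℝ} {x : ℝ}
    (hx : x ∈ SetL I I pay pr (fun ω => G ω - N' * lamP Pred ω)) :
    x + |N' - N| ∈ SetL I I pay pr (fun ω => G ω - N * lamP Pred ω) := by
  obtain ⟨ε, hε, n, a0, a, idx, hxeq, γ, hadm, hh⟩ := hx
  refine ⟨ε, hε, n, a0 + |N' - N|, a, idx, by rw [hxeq]; ring, γ, hadm, ?_⟩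
  intro ω hω
  have h1 := hh ω hω
  have hlam0 : 0 ≤ lamP Pred ω := lamP_nonneg _ _
  have hlam1 : lamP Pred ω ≤ 1 := lamP_le_one _ _
  have h2 : (N' - N) * lamP Pred ω ≤ |N' - N| := by
    calc (N' - N) * lamP Pred ω ≤ |N' - N| * lamP Pred ω :=
          mul_le_mul_of_nonneg_right (le_abs_self _) hlam0
      _ ≤ |N' - N| * 1 := mul_le_mul_of_nonneg_left hlam1 (abs_nonneg _)
      _ = |N' - N| := mul_one _
  have hid : (N' - N) * lamP Pred ω = N' * lamP Pred ω - N * lamP Pred ω := by ring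
  simp only at h1 ⊢
  linarith

theorem statement3 (T : ℝ) (hT : 0 < T) (d K : ℕ) (hd : 1 ≤ d)
    (Xc : Fin K → (Fin d → ℝ) → ℝ) (pc : Fin K → ℝ) (hopt : OptionData d K Xc pc)
    (ι : Type) (pay : ι → Path T (d + K) → ℝ) (pr : ι → ℝ)
    (hpaybd : ∀ i, ∃ C, ∀ ω, |pay i ω| ≤ C) (hpayuc : ∀ i, UniformContinuous (pay i))
    (Pred : Set (Path T (d + K))) (hPredm : MeasurableSet Pred)
    (hPredI : Pred ⊆ InfoSpace T d K Xc pc)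
    (G : Path T (d + K) → ℝ) (hGmeas : Measurable G) (hGbd : ∃ C, ∀ ω, |G ω| ≤ C) :
    VspSemiApprox (InfoSpace T d K Xc pc) Pred pay pr G =
      sInf {r : ℝ | ∃ N : ℝ, 0 ≤ N ∧
        r = VspSemiApprox (InfoSpace T d K Xc pc) (InfoSpace T d K Xc pc) pay pr
              (fun ω => G ω - N * lamP Pred ω)} := by
    obtain ⟨C, hCb⟩ := hGbd
    have hC : ∀ ω, G ω ≤ C := fun ω => (abs_le.mp (hCb ω)).2
    set I := InfoSpace T d K Xc pc with hIdef
    set S : ℝ → Set ℝ := fun N => SetL I I pay pr (fun ω => G ω - N * lamP Pred ω) with hSdef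
    set L : Set ℝ := SetL I Pred pay pr G with hLdef
    have hgoalL : VspSemiApprox I Pred pay pr G = sInf L := rfl
    have hVN : ∀ N : ℝ, VspSemiApprox I I pay pr (fun ω => G ω - N * lamP Pred ω)
        = sInf (S N) := fun N => rfl
    rw [hgoalL]
    have hsetR : {r : ℝ | ∃ N : ℝ, 0 ≤ N ∧
        r = VspSemiApprox I I pay pr (fun ω => G ω - N * lamP Pred ω)}
        = {r : ℝ | ∃ N : ℝ, 0 ≤ N ∧ r = sInf (S N)} := by
      simp only [hVN]
    rw [hsetR]
    set R : Set ℝ := {r : ℝ | ∃ N : ℝ, 0 ≤ N ∧ r = sInf (S N)} with hRdef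
    -- basic facts
    have hLne : L.Nonempty := ⟨C, const_mem_SetL hT I Pred pay pr G C hC⟩
    have hSne : ∀ N : ℝ, 0 ≤ N → (S N).Nonempty := by
      intro N hN
      refine ⟨C, const_mem_SetL hT I I pay pr _ C ?_⟩
      intro ω
      have := mul_nonneg hN (lamP_nonneg Pred ω)
      have := hC ω
      show G ω - N * lamP Pred ω ≤ C
      linarith
    have hRne : R.Nonempty := ⟨sInf (S 0), 0, le_rfl, rfl⟩
    have ha : ∀ N : ℝ, 0 ≤ N → ∀ δ : ℝ, 0 < δ → ∀ x ∈ S N, x + δ ∈ L :=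
      fun N hN δ hδ x hx => mem_SetL_shift_toL hN hδ hx
    have hb : ∀ x ∈ L, ∃ N : ℝ, 0 ≤ N ∧ x ∈ S N :=
      fun x hx => mem_SetL_to_SN hT hpaybd hC hx
    have hshift : ∀ N N' : ℝ, ∀ x ∈ S N', x + |N' - N| ∈ S N :=
      fun N N' x hx => mem_SN_shift hx
    by_cases hall : ∀ N : ℝ, 0 ≤ N → BddBelow (S N)
    · by_cases hLb : BddBelow L
      · -- both sides finite
        apply le_antisymm
        · apply le_csInf hRne
          rintro r ⟨N, hN, rfl⟩
          refine le_of_forall_pos_le_add ?_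
          intro δ hδ
          have h1 : sInf L - δ ≤ sInf (S N) := by
            apply le_csInf (hSne N hN)
            intro y hy
            have := csInf_le hLb (ha N hN δ hδ y hy)
            linarith
          linarith
        · have hRbdd : BddBelow R := by
            refine ⟨sInf L - 1, ?_⟩
            rintro r ⟨N, hN, rfl⟩
            apply le_csInf (hSne N hN)
            intro y hy
            have := csInf_le hLb (ha N hN 1 one_pos y hy)
            linarith
          apply le_csInf hLne
          intro x hx
          obtain ⟨N, hN, hxS⟩ := hb x hx
          calc sInf R ≤ sInf (S N) := csInf_le hRbdd ⟨N, hN, rfl⟩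
            _ ≤ x := csInf_le (hall N hN) hxS
      · -- L unbounded below, but all S N bounded below: R unbounded below
        rw [Real.sInf_of_not_bddBelow hLb]
        have hRnb : ¬ BddBelow R := by
          rintro ⟨b, hbR⟩
          apply hLb
          refine ⟨b, fun x hx => ?_⟩
          obtain ⟨N, hN, hxS⟩ := hb x hx
          have h1 : sInf (S N) ≤ x := csInf_le (hall N hN) hxS
          have h2 : b ≤ sInf (S N) := hbR ⟨N, hN, rfl⟩
          linarith
        rw [Real.sInf_of_not_bddBelow hRnb]
    · -- some S N₀ unbounded below: everything unbounded below
      push_neg at hall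
      obtain ⟨N₀, hN₀, hSnb⟩ := hall
      have hallnb : ∀ N : ℝ, 0 ≤ N → ¬ BddBelow (S N) := by
        intro N hN hbd
        obtain ⟨b, hbd⟩ := hbd
        apply hSnb
        refine ⟨b - |N₀ - N|, fun x hx => ?_⟩
        have := hbd (hshift N N₀ x hx)
        linarith
      have hLnb : ¬ BddBelow L := by
        rintro ⟨b, hbd⟩
        apply hSnb
        refine ⟨b - 1, fun x hx => ?_⟩
        have := hbd (ha N₀ hN₀ 1 one_pos x hx)
        linarith
      rw [Real.sInf_of_not_bddBelow hLnb]
      have hR0 : R = {0} := by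
        ext r
        constructor
        · rintro ⟨N, hN, rfl⟩
          exact Set.mem_singleton_iff.mpr (Real.sInf_of_not_bddBelow (hallnb N hN))
        · rintro rfl
          exact ⟨0, le_rfl, (Real.sInf_of_not_bddBelow (hallnb 0 le_rfl)).symm⟩
      rw [hR0, csInf_singleton]

end RobustFinance
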